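/- arXiv:2604.25445 — 5 statements merged into one kernel-verified Lean document; each statement's English description precedes it below -/
import Mathlib

section
/- Fix real numbers τ > 1, Y₀ > 0, k, λr, λc and α^r, α^c, and set λ = λr + i·λc. For each n ≥ 1 define vectors β_{j,n} = (β^r_{j,n}, β^c_{j,n}) ∈ ℝ² for 0 ≤ j ≤ n by the downward recursion: β_{n,n} = (α^r, α^c), and for 1 ≤ j ≤ n, β_{j-1,n} = ( I₂ + A/((j-1)(τ-1) + Y₀) ) · β_{j,n}, where A is the 2×2 real matrix with rows (λr−k, λc) and (−λc, λr−k). Then there exists a constant C > 0 (depending only on τ, Y₀, k, λ, α^r, α^c) such that for all n ≥ 1 and all 0 ≤ j ≤ n, both |β^r_{j,n}| ≤ C·((n+1)/(j+1))^{(λr−k)/(τ−1)} and |β^c_{j,n}| ≤ C·((n+1)/(j+1))^{(λr−k)/(τ−1)}. -/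
lemma aux_sumsq (n : ℕ) : ∑ i ∈ Finset.Ico 1 (n+1), (1:ℝ)/(i:ℝ)^2 ≤ 2 - 2/((n:ℝ)+1) := by
  induction n with
  | zero => simp
  | succ n ih =>
    rw [Finset.sum_Ico_succ_top (by omega)]
    have hn : (0:ℝ) < (n:ℝ)+1 := by positivity
    have hn2 : (0:ℝ) < (n:ℝ)+2 := by positivity
    have h : (1:ℝ)/((n:ℝ)+1)^2 ≤ 2/((n:ℝ)+1) - 2/((n:ℝ)+2) := by
      rw [div_sub_div _ _ (ne_of_gt hn) (ne_of_gt hn2), div_le_div_iff₀ (by positivity) (by positivity)]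
      ring_nf
      nlinarith [sq_nonneg ((n:ℝ)+1)]
    have he : ((n:ℝ)+1+1) = (n:ℝ)+2 := by ring
    push_cast
    rw [he]
    linarith

lemma aux_telescope (j : ℕ) : ∀ n : ℕ, j ≤ n →
    ∏ i ∈ Finset.Ico (j+1) (n+1), (((i:ℝ)+1)/(i:ℝ)) = ((n:ℝ)+1)/((j:ℝ)+1) := by
  intro n
  induction n with
  | zero => intro h; interval_cases j; simp
  | succ n ih =>
    intro h
    rcases Nat.lt_or_ge j (n+1) with h' | h'
    · have hjn : j ≤ n := by omega
      rw [Finset.prod_Ico_succ_top (by omega), ih hjn]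
      have hn : ((n:ℝ)+1) ≠ 0 := by positivity
      have hj : ((j:ℝ)+1) ≠ 0 := by positivity
      push_cast
      field_simp
    · have : j = n+1 := by omega
      subst this
      rw [Finset.Ico_self, Finset.prod_empty, eq_comm, div_self (by push_cast; positivity)]
set_option maxHeartbeats 1000000 in

lemma aux_key (τ Y₀ a lc : ℝ) (hτ : 1 < τ) (hY : 0 < Y₀) (x : ℝ) (hx : 1 ≤ x) :
    (1 + a/((x-1)*(τ-1)+Y₀))^2 + (lc/((x-1)*(τ-1)+Y₀))^2
      ≤ ((x+1)/x)^(2*(a/(τ-1))) * Real.exp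
        ((2 * |a| * (1/(τ-1) + |τ-1-Y₀| / (min Y₀ ((τ-1)/2) * (τ-1)))
          + (a^2+lc^2)/(min Y₀ ((τ-1)/2))^2)/x^2) := by
  set c : ℝ := min Y₀ ((τ-1)/2) with hcdef
  set K : ℝ := 2 * |a| * (1/(τ-1) + |τ-1-Y₀| / (c * (τ-1))) + (a^2+lc^2)/c^2 with hKdef
  set d : ℝ := (x-1)*(τ-1)+Y₀ with hddef
  have hτ1 : (0:ℝ) < τ - 1 := by linarith
  have hc1 : c ≤ Y₀ := min_le_left _ _
  have hc2 : c ≤ (τ-1)/2 := min_le_right _ _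
  have hc0 : 0 < c := lt_min hY (by linarith)
  have hx0 : (0:ℝ) < x := by linarith
  have hxp : (0:ℝ) < x + 1 := by linarith
  have hd0 : 0 < d := by nlinarith
  have hdc : c * x ≤ d := by nlinarith
  have hR : (0:ℝ) < (x+1)/x := by positivity
  set L : ℝ := Real.log ((x+1)/x) with hLdef
  have hL1 : L ≤ 1/x := by
    have h0 := Real.log_le_sub_one_of_pos hR
    have he : (x+1)/x - 1 = 1/x := by field_simp; ring
    rw [← hLdef, he] at h0
    exact h0
  have hL2 : 1/(x+1) ≤ L := by
    rw [hLdef, Real.le_log_iff_exp_le hR]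
    have h3 := Real.add_one_le_exp (-(1/(x+1)))
    rw [Real.exp_neg] at h3
    have h4 : (0:ℝ) < Real.exp (1/(x+1)) := Real.exp_pos _
    have h5 : (-(1/(x+1)) + 1) * Real.exp (1/(x+1)) ≤ 1 := by
      calc (-(1/(x+1)) + 1) * Real.exp (1/(x+1))
          ≤ (Real.exp (1/(x+1)))⁻¹ * Real.exp (1/(x+1)) :=
            mul_le_mul_of_nonneg_right h3 (le_of_lt h4)
        _ = 1 := inv_mul_cancel₀ (ne_of_gt h4)
    have h6 : -(1/(x+1)) + 1 = x/(x+1) := by field_simp; ring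
    rw [h6] at h5
    rw [le_div_iff₀ hx0]
    have h7 := mul_le_mul_of_nonneg_right h5 (le_of_lt hxp)
    have h8 : x/(x+1) * Real.exp (1/(x+1)) * (x+1) = Real.exp (1/(x+1)) * x := by
      field_simp
    rw [h8] at h7
    linarith
  have hxsq : (0:ℝ) < x^2 := by positivity
  have h1x : |1/x - L| ≤ 1/x^2 := by
    rw [abs_le]
    constructor
    · have : (0:ℝ) ≤ 1/x^2 := by positivity
      linarith
    · have hsub : 1/x - 1/(x+1) ≤ 1/x^2 := by
        rw [div_sub_div _ _ (ne_of_gt hx0) (ne_of_gt hxp), div_le_div_iff₀ (by positivity) hxsq]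
        nlinarith
      linarith
  set u : ℝ := 1/d - L/(τ-1) with hudef
  have hu : u = (1/x - L)/(τ-1) + (τ-1-Y₀)/(d*(τ-1)*x) := by
    rw [hudef]
    field_simp
    ring
  have h2x : |(τ-1-Y₀)/(d*(τ-1)*x)| ≤ (|τ-1-Y₀|/(c*(τ-1)))/x^2 := by
    rw [abs_div, abs_of_pos (by positivity : (0:ℝ) < d*(τ-1)*x), div_div]
    refine div_le_div_of_nonneg_left (abs_nonneg _) (by positivity) ?_
    nlinarith [mul_le_mul_of_nonneg_right hdc (by positivity : (0:ℝ) ≤ (τ-1)*x)]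
  have hM : |u| ≤ (1/(τ-1) + |τ-1-Y₀|/(c*(τ-1)))/x^2 := by
    calc |u| ≤ |(1/x - L)/(τ-1)| + |(τ-1-Y₀)/(d*(τ-1)*x)| := by
          rw [hu]; exact abs_add_le _ _
      _ ≤ (1/x^2)/(τ-1) + (|τ-1-Y₀|/(c*(τ-1)))/x^2 := by
          gcongr
          rw [abs_div, abs_of_pos hτ1]
          gcongr
      _ = (1/(τ-1) + |τ-1-Y₀|/(c*(τ-1)))/x^2 := by ring
  have e1 : 2*a/d - (2*(a/(τ-1)))*L = 2*a*u := by
    rw [hudef]; field_simp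
  have e1' : 2*a*u ≤ 2 * |a| * ((1/(τ-1) + |τ-1-Y₀|/(c*(τ-1)))/x^2) := by
    calc 2*a*u ≤ |2*a*u| := le_abs_self _
      _ = 2 * |a| * |u| := by rw [abs_mul, abs_mul, abs_two]
      _ ≤ 2 * |a| * ((1/(τ-1) + |τ-1-Y₀|/(c*(τ-1)))/x^2) := by
          apply mul_le_mul_of_nonneg_left hM (by positivity)
  have e2 : (a^2+lc^2)/d^2 ≤ ((a^2+lc^2)/c^2)/x^2 := by
    rw [div_div]
    refine div_le_div_of_nonneg_left (by positivity) (by positivity) ?_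
    nlinarith [mul_self_le_mul_self (by positivity : (0:ℝ) ≤ c*x) hdc]
  have hsum : 2*a/d + (a^2+lc^2)/d^2 ≤ 2*(a/(τ-1))*L + K/x^2 := by
    have hKx : K/x^2 = 2 * |a| * ((1/(τ-1) + |τ-1-Y₀|/(c*(τ-1)))/x^2) + ((a^2+lc^2)/c^2)/x^2 := by
      rw [hKdef]; ring
    rw [hKx]
    linarith
  have hρ : (1 + a/d)^2 + (lc/d)^2 = 1 + (2*a/d + (a^2+lc^2)/d^2) := by
    field_simp; ring
  calc (1 + a/d)^2 + (lc/d)^2 = 1 + (2*a/d + (a^2+lc^2)/d^2) := hρ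
    _ ≤ 1 + (2*(a/(τ-1))*L + K/x^2) := by linarith
    _ ≤ Real.exp (2*(a/(τ-1))*L + K/x^2) := by
        have := Real.add_one_le_exp (2*(a/(τ-1))*L + K/x^2)
        linarith
    _ = Real.exp (2*(a/(τ-1))*L) * Real.exp (K/x^2) := Real.exp_add _ _
    _ = ((x+1)/x)^(2*(a/(τ-1))) * Real.exp (K/x^2) := by
        rw [Real.rpow_def_of_pos hR, ← hLdef, mul_comm L]


/-- For the downward recursion `β_{j-1,n} = (I₂ + A/((j-1)(τ-1)+Y₀)) β_{j,n}` with
`β_{n,n} = (αʳ, αᶜ)` and `A = [[λr−k, λc],[−λc, λr−k]]`, there is a constant `C > 0`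
such that `|βʳ_{j,n}| ≤ C ((n+1)/(j+1))^{(λr−k)/(τ−1)}` and likewise for `βᶜ_{j,n}`,
for all `n ≥ 1` and `0 ≤ j ≤ n`. -/
theorem beta_recursion_bound
    (τ Y₀ k lr lc αr αc : ℝ) (hτ : 1 < τ) (hY : 0 < Y₀)
    (β : ℕ → ℕ → ℝ × ℝ)
    (hβn : ∀ n : ℕ, 1 ≤ n → β n n = (αr, αc))
    (hrec : ∀ n j : ℕ, 1 ≤ j → j ≤ n →
      β n (j - 1) =
        ((1 + (lr - k) / (((j : ℝ) - 1) * (τ - 1) + Y₀)) * (β n j).1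
            + (lc / (((j : ℝ) - 1) * (τ - 1) + Y₀)) * (β n j).2,
         (-(lc / (((j : ℝ) - 1) * (τ - 1) + Y₀))) * (β n j).1
            + (1 + (lr - k) / (((j : ℝ) - 1) * (τ - 1) + Y₀)) * (β n j).2)) :
    ∃ C : ℝ, 0 < C ∧ ∀ n : ℕ, 1 ≤ n → ∀ j : ℕ, j ≤ n →
      |(β n j).1| ≤ C * (((n : ℝ) + 1) / ((j : ℝ) + 1)) ^ ((lr - k) / (τ - 1)) ∧
      |(β n j).2| ≤ C * (((n : ℝ) + 1) / ((j : ℝ) + 1)) ^ ((lr - k) / (τ - 1)) := by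
  have hτ1 : (0:ℝ) < τ - 1 := by linarith
  set c : ℝ := min Y₀ ((τ-1)/2) with hcdef
  have hc0 : 0 < c := lt_min hY (by linarith)
  set K : ℝ := 2 * |lr - k| * (1/(τ-1) + |τ-1-Y₀| / (c * (τ-1))) + ((lr-k)^2+lc^2)/c^2
    with hKdef
  have hK0 : 0 ≤ K := by positivity
  set q : ℝ := (lr - k)/(τ-1) with hqdef
  set B : ℝ := αr^2 + αc^2 + 1 with hBdef
  have hB0 : (0:ℝ) < B := by positivity
  set g : ℕ → ℝ := fun i => (((i:ℝ)+1)/(i:ℝ))^(2*q) * Real.exp (K/(i:ℝ)^2) with hgdef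
  have hg0 : ∀ i : ℕ, 0 ≤ g i := by
    intro i
    rw [hgdef]
    positivity
  -- main downward induction
  have main : ∀ n : ℕ, 1 ≤ n → ∀ m : ℕ, m ≤ n →
      (β n (n-m)).1^2 + (β n (n-m)).2^2 ≤ B * ∏ i ∈ Finset.Ico (n-m+1) (n+1), g i := by
    intro n hn m
    induction m with
    | zero =>
      intro _
      simp only [Nat.sub_zero, Finset.Ico_self, Finset.prod_empty, mul_one]
      rw [hβn n hn]
      dsimp only
      rw [hBdef]
      linarith
    | succ m ih =>
      intro hm
      have hmn : m ≤ n := by omega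
      set j : ℕ := n - m with hj
      have ihh := ih hmn
      have hj1 : 1 ≤ j := by omega
      have hjn : j ≤ n := by omega
      have hstep := hrec n j hj1 hjn
      have hnm1 : n - (m+1) = j - 1 := by omega
      have hsq : (β n (j-1)).1^2 + (β n (j-1)).2^2
          = ((1 + (lr-k)/(((j:ℝ)-1)*(τ-1)+Y₀))^2 + (lc/(((j:ℝ)-1)*(τ-1)+Y₀))^2)
              * ((β n j).1^2 + (β n j).2^2) := by
        rw [hstep]
        dsimp only
        ring
      have hjR : (1:ℝ) ≤ (j:ℝ) := by exact_mod_cast hj1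
      have hkey : (1 + (lr-k)/(((j:ℝ)-1)*(τ-1)+Y₀))^2 + (lc/(((j:ℝ)-1)*(τ-1)+Y₀))^2
          ≤ g j := by
        rw [hgdef]
        dsimp only
        rw [hqdef, hKdef, hcdef]
        exact aux_key τ Y₀ (lr-k) lc hτ hY (j:ℝ) hjR
      rw [hnm1, show j - 1 + 1 = j from by omega]
      rw [Finset.prod_eq_prod_Ico_succ_bot (show j < n+1 by omega) g]
      rw [hsq]
      have hXY : (0:ℝ) ≤ (β n j).1^2 + (β n j).2^2 := by positivity
      have hprod0 : (0:ℝ) ≤ B * ∏ i ∈ Finset.Ico (j+1) (n+1), g i :=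
        mul_nonneg hB0.le (Finset.prod_nonneg fun i _ => hg0 i)
      calc ((1 + (lr-k)/(((j:ℝ)-1)*(τ-1)+Y₀))^2 + (lc/(((j:ℝ)-1)*(τ-1)+Y₀))^2)
              * ((β n j).1^2 + (β n j).2^2)
          ≤ g j * ((β n j).1^2 + (β n j).2^2) := mul_le_mul_of_nonneg_right hkey hXY
        _ ≤ g j * (B * ∏ i ∈ Finset.Ico (j+1) (n+1), g i) :=
            mul_le_mul_of_nonneg_left ihh (hg0 j)
        _ = B * (g j * ∏ i ∈ Finset.Ico (j+1) (n+1), g i) := by ring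
  -- product bound
  have prodbd : ∀ n j : ℕ, j ≤ n →
      ∏ i ∈ Finset.Ico (j+1) (n+1), g i
        ≤ (((n:ℝ)+1)/((j:ℝ)+1))^(2*q) * Real.exp (2*K) := by
    intro n j hjn
    have hunfold : ∏ i ∈ Finset.Ico (j+1) (n+1), g i
        = (∏ i ∈ Finset.Ico (j+1) (n+1), (((i:ℝ)+1)/(i:ℝ))^(2*q))
          * ∏ i ∈ Finset.Ico (j+1) (n+1), Real.exp (K/(i:ℝ)^2) := by
      rw [hgdef, ← Finset.prod_mul_distrib]
    rw [hunfold]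
    have h1 : ∏ i ∈ Finset.Ico (j+1) (n+1), (((i:ℝ)+1)/(i:ℝ))^(2*q)
        = (((n:ℝ)+1)/((j:ℝ)+1))^(2*q) := by
      rw [Real.finset_prod_rpow _ _ (fun i _ => by positivity) _, aux_telescope j n hjn]
    have h2 : ∏ i ∈ Finset.Ico (j+1) (n+1), Real.exp (K/(i:ℝ)^2) ≤ Real.exp (2*K) := by
      rw [← Real.exp_sum]
      apply Real.exp_le_exp.2
      have hsum : ∑ i ∈ Finset.Ico (j+1) (n+1), K/(i:ℝ)^2
          = K * ∑ i ∈ Finset.Ico (j+1) (n+1), (1:ℝ)/(i:ℝ)^2 := by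
        rw [Finset.mul_sum]
        exact Finset.sum_congr rfl (fun i _ => by ring)
      rw [hsum]
      have hsub : ∑ i ∈ Finset.Ico (j+1) (n+1), (1:ℝ)/(i:ℝ)^2
          ≤ ∑ i ∈ Finset.Ico 1 (n+1), (1:ℝ)/(i:ℝ)^2 :=
        Finset.sum_le_sum_of_subset_of_nonneg
          (Finset.Ico_subset_Ico (by omega) le_rfl) (fun i _ _ => by positivity)
      have hS := aux_sumsq n
      have h2n : (0:ℝ) ≤ 2/((n:ℝ)+1) := by positivity
      have hS2 : ∑ i ∈ Finset.Ico (j+1) (n+1), (1:ℝ)/(i:ℝ)^2 ≤ 2 := by linarith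
      calc K * ∑ i ∈ Finset.Ico (j+1) (n+1), (1:ℝ)/(i:ℝ)^2
          ≤ K * 2 := mul_le_mul_of_nonneg_left hS2 hK0
        _ = 2*K := by ring
    have h1' : (0:ℝ) ≤ (((n:ℝ)+1)/((j:ℝ)+1))^(2*q) := by positivity
    rw [h1]
    exact mul_le_mul_of_nonneg_left h2 h1'
  -- assemble
  refine ⟨Real.sqrt (B * Real.exp (2*K)), Real.sqrt_pos.2 (by positivity), ?_⟩
  intro n hn j hjn
  set C : ℝ := Real.sqrt (B * Real.exp (2*K)) with hCdef
  have hC0 : 0 ≤ C := Real.sqrt_nonneg _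
  have hmain := main n hn (n-j) (by omega)
  rw [show n - (n-j) = j from by omega] at hmain
  have hprodbd := prodbd n j hjn
  set R : ℝ := ((n:ℝ)+1)/((j:ℝ)+1) with hRdef
  have hR0 : (0:ℝ) < R := by rw [hRdef]; positivity
  have hfin : (β n j).1^2 + (β n j).2^2 ≤ B * (R^(2*q) * Real.exp (2*K)) :=
    le_trans hmain (mul_le_mul_of_nonneg_left hprodbd hB0.le)
  have hsqq : (R^q)^2 = R^(2*q) := by
    rw [sq, ← Real.rpow_add hR0]
    congr 1
    ring
  have hC2 : B * (R^(2*q) * Real.exp (2*K)) = (C * R^q)^2 := by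
    rw [mul_pow, hCdef, Real.sq_sqrt (by positivity), hsqq]
    ring
  rw [hC2] at hfin
  have hCR0 : (0:ℝ) ≤ C * R^q := mul_nonneg hC0 (Real.rpow_nonneg hR0.le q)
  constructor
  · calc |(β n j).1| = Real.sqrt ((β n j).1^2) := (Real.sqrt_sq_eq_abs _).symm
      _ ≤ Real.sqrt ((C * R^q)^2) := Real.sqrt_le_sqrt (by nlinarith [sq_nonneg (β n j).2])
      _ = C * R^q := Real.sqrt_sq hCR0
  · calc |(β n j).2| = Real.sqrt ((β n j).2^2) := (Real.sqrt_sq_eq_abs _).symm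
      _ ≤ Real.sqrt ((C * R^q)^2) := Real.sqrt_le_sqrt (by nlinarith [sq_nonneg (β n j).1])
      _ = C * R^q := Real.sqrt_sq hCR0
end

section
/- Let p₁, p₂, c₁, c₂, a₁, b₁, a₂, b₂ be real numbers with p₁ + p₂ < 1. For 1 ≤ j ≤ n define f_{j,n} = (n/(j+1))^{p₁} · ( a₁·cos(c₁·log(n/(j+1))) + b₁·sin(c₁·log(n/(j+1))) ) and g_{j,n} = (n/(j+1))^{p₂} · ( a₂·cos(c₂·log(n/(j+1))) + b₂·sin(c₂·log(n/(j+1))) ). Then the limit as n → ∞ of (1/n) · ∑_{j=1}^{n} f_{j,n} · g_{j,n} exists and equals the improper integral ∫₀¹ t^{−(p₁+p₂)} · ( a₁·cos(c₁·log t) − b₁·sin(c₁·log t) ) · ( a₂·cos(c₂·log t) − b₂·sin(c₂·log t) ) dt. -/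
open Real MeasureTheory Set Filter

private lemma trig_bound (a b x : ℝ) :
    |a * Real.cos x - b * Real.sin x| ≤ |a| + |b| := by
  calc |a * Real.cos x - b * Real.sin x| ≤ |a * Real.cos x| + |b * Real.sin x| :=
        abs_sub _ _
    _ ≤ |a| * 1 + |b| * 1 := by
        rw [abs_mul, abs_mul]
        gcongr
        · exact Real.abs_cos_le_one x
        · exact Real.abs_sin_le_one x
    _ = |a| + |b| := by ring

set_option maxHeartbeats 1000000 in
/-- The generic Riemann-sum-to-improper-integral lemma: for `q < 1` and a bounded
function `G` continuous on `(0, ∞)`, the Riemann sums `(1/n) ∑_{j=1}^n F((j+1)/n)` of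
`F t = t^(-q) G t` converge to `∫_{(0,1)} F`. -/
theorem riemann_aux (q : ℝ) (hq : q < 1) (G : ℝ → ℝ) (hGmeas : Measurable G)
    (hGcont : ContinuousOn G (Set.Ioi 0)) (C : ℝ)
    (hC : ∀ t : ℝ, 0 < t → |G t| ≤ C) :
    IntegrableOn (fun t : ℝ => t ^ (-q) * G t) (Set.Ioo 0 1) volume ∧
    Tendsto (fun n : ℕ => (1 / (n : ℝ)) * ∑ j ∈ Finset.Icc 1 n,
        ((((j : ℝ) + 1) / n) ^ (-q) * G (((j : ℝ) + 1) / n))) atTop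
      (nhds (∫ t in Set.Ioo (0:ℝ) 1, t ^ (-q) * G t)) := by
  have hC0 : 0 ≤ C := le_trans (abs_nonneg _) (hC 1 one_pos)
  set F : ℝ → ℝ := fun t => t ^ (-q) * G t with hF
  have hFmeas : Measurable F := by
    have h1 : Measurable fun t : ℝ => t ^ (-q) := by fun_prop
    exact h1.mul hGmeas
  -- integrability of t ^ (-q) on (0,1)
  have hrpow_int : IntegrableOn (fun t : ℝ => t ^ (-q)) (Set.Ioo 0 1) volume := by
    have h1 : IntervalIntegrable (fun t : ℝ => t ^ (-q)) volume 0 1 :=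
      intervalIntegral.intervalIntegrable_rpow' (by linarith)
    rw [intervalIntegrable_iff_integrableOn_Ioc_of_le zero_le_one] at h1
    exact h1.mono_set Set.Ioo_subset_Ioc_self
  have hFbound : ∀ t ∈ Set.Ioo (0:ℝ) 1, ‖F t‖ ≤ C * t ^ (-q) := by
    intro t ht
    have ht0 : (0:ℝ) < t := ht.1
    have h1 : ‖F t‖ = t ^ (-q) * |G t| := by
      rw [hF, Real.norm_eq_abs, abs_mul, abs_of_nonneg (Real.rpow_nonneg ht0.le _)]
    rw [h1, mul_comm C]
    exact mul_le_mul_of_nonneg_left (hC t ht0) (Real.rpow_nonneg ht0.le _)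
  have hFint : IntegrableOn F (Set.Ioo 0 1) volume := by
    refine Integrable.mono' (hrpow_int.const_mul C) hFmeas.aestronglyMeasurable ?_
    exact (ae_restrict_iff' measurableSet_Ioo).2 (Filter.Eventually.of_forall hFbound)
  refine ⟨hFint, ?_⟩
  -- the step functions
  set φ : ℕ → ℝ → ℝ := fun n t => (((⌊(n : ℝ) * t⌋ : ℤ) : ℝ) + 2) / n with hφ
  set g : ℕ → ℝ → ℝ := fun n t => F (φ n t) with hg
  have hφmeas : ∀ n : ℕ, Measurable (φ n) := by
    intro n
    apply Measurable.div _ measurable_const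
    apply Measurable.add _ measurable_const
    have hz : Measurable (fun z : ℤ => (z : ℝ)) := measurable_from_top
    exact hz.comp ((measurable_const.mul measurable_id).floor)
  have hgmeas : ∀ n : ℕ, Measurable (g n) := fun n => hFmeas.comp (hφmeas n)
  -- bounds on φ
  have hφlow : ∀ (n : ℕ), 0 < n → ∀ t : ℝ, 0 < t → t ≤ φ n t := by
    intro n hn t ht
    have hnp : (0:ℝ) < n := by exact_mod_cast hn
    have h1 : (n:ℝ) * t ≤ ((⌊(n : ℝ) * t⌋ : ℤ) : ℝ) + 2 := by
      have := (Int.lt_floor_add_one ((n:ℝ) * t)).le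
      linarith
    show t ≤ (((⌊(n : ℝ) * t⌋ : ℤ) : ℝ) + 2) / n
    rw [le_div_iff₀ hnp]
    nlinarith
  have hφupp : ∀ (n : ℕ), 0 < n → ∀ t : ℝ, φ n t ≤ t + 2 / n := by
    intro n hn t
    have hnp : (0:ℝ) < n := by exact_mod_cast hn
    have h1 : ((⌊(n : ℝ) * t⌋ : ℤ) : ℝ) + 2 ≤ (n:ℝ) * t + 2 := by
      have := Int.floor_le ((n:ℝ) * t)
      linarith
    rw [hφ, div_le_iff₀ hnp]
    calc ((⌊(n : ℝ) * t⌋ : ℤ) : ℝ) + 2 ≤ (n:ℝ) * t + 2 := h1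
      _ = (t + 2 / n) * n := by field_simp
  -- the dominating function
  set D : ℝ → ℝ := fun t => (t ^ (-q) + (3:ℝ) ^ (-q)) * C with hD
  have hDint : IntegrableOn D (Set.Ioo 0 1) volume := by
    refine Integrable.mul_const ?_ C
    refine hrpow_int.add ?_
    exact integrableOn_const (by simp [Real.volume_Ioo])
  have h_bound : ∀ᶠ n : ℕ in atTop, ∀ᵐ t ∂(volume.restrict (Set.Ioo (0:ℝ) 1)),
      ‖g n t‖ ≤ D t := by
    filter_upwards [Filter.eventually_ge_atTop 1] with n hn
    refine (ae_restrict_iff' measurableSet_Ioo).2 (Filter.Eventually.of_forall ?_)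
    intro t ht
    have hnp : 0 < n := hn
    have ht0 : (0:ℝ) < t := ht.1
    have hlow := hφlow n hnp t ht0
    have hupp := hφupp n hnp t
    have hs0 : (0:ℝ) < φ n t := lt_of_lt_of_le ht0 hlow
    have hs3 : φ n t ≤ 3 := by
      have h2n : (2:ℝ) / n ≤ 2 := by
        have : (1:ℝ) ≤ n := by exact_mod_cast hn
        rw [div_le_iff₀ (by linarith)]
        nlinarith
      linarith [ht.2]
    have hkey : (φ n t) ^ (-q) ≤ t ^ (-q) + (3:ℝ) ^ (-q) := by
      rcases le_or_gt 0 (-q) with hq' | hq'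
      · have : (φ n t) ^ (-q) ≤ (3:ℝ) ^ (-q) := Real.rpow_le_rpow hs0.le hs3 hq'
        have h0 : (0:ℝ) ≤ t ^ (-q) := Real.rpow_nonneg ht0.le _
        linarith
      · have : (φ n t) ^ (-q) ≤ t ^ (-q) :=
          Real.rpow_le_rpow_of_nonpos ht0 hlow hq'.le
        have h0 : (0:ℝ) ≤ (3:ℝ) ^ (-q) := Real.rpow_nonneg (by norm_num) _
        linarith
    have h1 : ‖g n t‖ = (φ n t) ^ (-q) * |G (φ n t)| := by
      rw [hg, hF, Real.norm_eq_abs, abs_mul, abs_of_nonneg (Real.rpow_nonneg hs0.le _)]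
    rw [h1, hD]
    calc (φ n t) ^ (-q) * |G (φ n t)| ≤ (t ^ (-q) + (3:ℝ) ^ (-q)) * C := by
          refine mul_le_mul hkey (hC _ hs0) (abs_nonneg _) ?_
          have h0t : (0:ℝ) ≤ t ^ (-q) := Real.rpow_nonneg ht0.le _
          have h03 : (0:ℝ) ≤ (3:ℝ) ^ (-q) := Real.rpow_nonneg (by norm_num) _
          linarith
      _ = D t := rfl
  -- pointwise convergence
  have h_lim : ∀ᵐ t ∂(volume.restrict (Set.Ioo (0:ℝ) 1)),
      Tendsto (fun n : ℕ => g n t) atTop (nhds (F t)) := by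
    refine (ae_restrict_iff' measurableSet_Ioo).2 (Filter.Eventually.of_forall ?_)
    intro t ht
    have ht0 : (0:ℝ) < t := ht.1
    have hφt : Tendsto (fun n : ℕ => φ n t) atTop (nhds t) := by
      have hupper : Tendsto (fun n : ℕ => t + 2 / (n:ℝ)) atTop (nhds t) := by
        have h2 := tendsto_const_div_atTop_nhds_zero_nat (2:ℝ)
        have h : Tendsto (fun _ : ℕ => t) atTop (nhds t) := tendsto_const_nhds
        simpa using h.add h2
      refine tendsto_of_tendsto_of_tendsto_of_le_of_le' tendsto_const_nhds hupper ?_ ?_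
      · filter_upwards [Filter.eventually_gt_atTop 0] with n hn
        exact hφlow n hn t ht0
      · filter_upwards [Filter.eventually_gt_atTop 0] with n hn
        exact hφupp n hn t
    have hFc : ContinuousAt F t := by
      have h1 : ContinuousAt (fun s : ℝ => s ^ (-q)) t :=
        Real.continuousAt_rpow_const t (-q) (Or.inl ht0.ne')
      have h2 : ContinuousAt G t := hGcont.continuousAt (Ioi_mem_nhds ht0)
      exact h1.mul h2
    exact hFc.tendsto.comp hφt
  have tendsto_int : Tendsto (fun n : ℕ => ∫ t in Set.Ioo (0:ℝ) 1, g n t) atTop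
      (nhds (∫ t in Set.Ioo (0:ℝ) 1, F t)) := by
    refine MeasureTheory.tendsto_integral_filter_of_dominated_convergence D ?_ h_bound hDint h_lim
    exact Filter.Eventually.of_forall fun n => (hgmeas n).aestronglyMeasurable
  -- identification of the integrals of the step functions with the Riemann sums
  have heq : ∀ᶠ n : ℕ in atTop, (∫ t in Set.Ioo (0:ℝ) 1, g n t) =
      (1 / (n : ℝ)) * ∑ j ∈ Finset.Icc 1 n,
        ((((j : ℝ) + 1) / n) ^ (-q) * G (((j : ℝ) + 1) / n)) := by
    filter_upwards [Filter.eventually_ge_atTop 1] with n hn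
    have hnp : (0:ℝ) < n := by exact_mod_cast hn
    set a : ℕ → ℝ := fun k => k / n with ha
    have hstep : ∀ k : ℕ, k < n →
        (g n) =ᵐ[volume.restrict (Set.Ioc (a k) (a (k+1)))]
          (fun _ => F (((k:ℝ) + 2) / n)) := by
      intro k hk
      have h1 : (g n) =ᵐ[volume.restrict (Set.Ioo (a k) (a (k+1)))]
          (fun _ => F (((k:ℝ) + 2) / n)) := by
        refine (ae_restrict_iff' measurableSet_Ioo).2 (Filter.Eventually.of_forall ?_)
        intro t ht
        have hfl : ⌊(n : ℝ) * t⌋ = (k : ℤ) := by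
          rw [Int.floor_eq_iff]
          constructor
          · push_cast
            have := ht.1
            rw [ha] at this
            calc (k:ℝ) = (k:ℝ)/n * n := by field_simp
              _ ≤ t * n := by
                  exact mul_le_mul_of_nonneg_right this.le hnp.le
              _ = (n:ℝ) * t := by ring
          · push_cast
            have := ht.2
            rw [ha] at this
            calc (n:ℝ) * t = t * n := by ring
              _ < ((k:ℝ)+1)/n * n := by
                  exact mul_lt_mul_of_pos_right (by push_cast at this ⊢; linarith) hnp
              _ = (k:ℝ) + 1 := by field_simp
        simp only [hg, hφ, hfl]
        norm_num
      calc (g n) =ᵐ[volume.restrict (Set.Ioc (a k) (a (k+1)))]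
            (g n) := Filter.EventuallyEq.refl _ _
        _ =ᵐ[volume.restrict (Set.Ioc (a k) (a (k+1)))] (fun _ => F (((k:ℝ) + 2) / n)) := by
            rw [← Measure.restrict_congr_set Ioo_ae_eq_Ioc]
            exact h1
    have hle : ∀ k : ℕ, a k ≤ a (k+1) := by
      intro k
      rw [ha]
      exact (div_le_div_iff_of_pos_right hnp).2 (by push_cast; linarith)
    have hii : ∀ k : ℕ, k < n → IntervalIntegrable (g n) volume (a k) (a (k+1)) := by
      intro k hk
      rw [intervalIntegrable_iff_integrableOn_Ioc_of_le (hle k)]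
      exact (MeasureTheory.integrableOn_const
        (by simp [Real.volume_Ioc])).congr (hstep k hk).symm
    have hval : ∀ k : ℕ, k < n →
        (∫ t in (a k)..(a (k+1)), g n t) = (1 / (n:ℝ)) * F (((k:ℝ) + 2) / n) := by
      intro k hk
      rw [intervalIntegral.integral_of_le (hle k), MeasureTheory.integral_congr_ae (hstep k hk)]
      rw [MeasureTheory.setIntegral_const]
      rw [measureReal_def, Real.volume_Ioc]
      rw [ENNReal.toReal_ofReal (sub_nonneg.2 (hle k))]
      have hsub : a (k+1) - a k = 1/n := by rw [ha]; push_cast; field_simp; ring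
      rw [hsub, smul_eq_mul]
    have hsum : (∫ t in (a 0)..(a n), g n t) =
        ∑ k ∈ Finset.range n, (1 / (n:ℝ)) * F (((k:ℝ) + 2) / n) := by
      rw [← intervalIntegral.sum_integral_adjacent_intervals
        (fun k hk => hii k hk)]
      exact Finset.sum_congr rfl fun k hk => hval k (Finset.mem_range.1 hk)
    have h0 : a 0 = 0 := by simp [ha]
    have h1 : a n = 1 := by rw [ha]; field_simp
    rw [h0, h1] at hsum
    have hIoo : (∫ t in Set.Ioo (0:ℝ) 1, g n t) = ∫ t in (0:ℝ)..1, g n t := by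
      rw [intervalIntegral.integral_of_le zero_le_one, MeasureTheory.integral_Ioc_eq_integral_Ioo]
    rw [hIoo, hsum, Finset.mul_sum]
    rw [show Finset.Icc 1 n = Finset.Ico 1 (n+1) by rw [Finset.Ico_add_one_right_eq_Icc],
      Finset.sum_Ico_eq_sum_range]
    simp only [Nat.add_sub_cancel]
    refine Finset.sum_congr rfl fun k hk => ?_
    push_cast
    rw [hF]
    ring_nf
  exact tendsto_int.congr' heq

set_option maxHeartbeats 1000000 in
/-- Riemann-sum-to-integral limit: with `p₁ + p₂ < 1`, the normalized sums
`(1/n) ∑_{j=1}^n f_{j,n} g_{j,n}` converge to the (convergent) improper integral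
`∫₀¹ t^{−(p₁+p₂)} (a₁ cos(c₁ log t) − b₁ sin(c₁ log t)) (a₂ cos(c₂ log t) − b₂ sin(c₂ log t)) dt`. -/
theorem tendsto_riemann_sum_to_integral
    (p₁ p₂ c₁ c₂ a₁ b₁ a₂ b₂ : ℝ) (hp : p₁ + p₂ < 1) :
    IntegrableOn
      (fun t : ℝ => t ^ (-(p₁ + p₂)) *
        ((a₁ * Real.cos (c₁ * Real.log t) - b₁ * Real.sin (c₁ * Real.log t)) *
         (a₂ * Real.cos (c₂ * Real.log t) - b₂ * Real.sin (c₂ * Real.log t))))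
      (Set.Ioo 0 1) volume ∧
    Tendsto
      (fun n : ℕ =>
        (1 / (n : ℝ)) * ∑ j ∈ Finset.Icc 1 n,
          (((n : ℝ) / ((j : ℝ) + 1)) ^ p₁ *
              (a₁ * Real.cos (c₁ * Real.log ((n : ℝ) / ((j : ℝ) + 1))) +
               b₁ * Real.sin (c₁ * Real.log ((n : ℝ) / ((j : ℝ) + 1)))) *
           (((n : ℝ) / ((j : ℝ) + 1)) ^ p₂ *
              (a₂ * Real.cos (c₂ * Real.log ((n : ℝ) / ((j : ℝ) + 1))) +
               b₂ * Real.sin (c₂ * Real.log ((n : ℝ) / ((j : ℝ) + 1)))))))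
      atTop
      (nhds (∫ t in Set.Ioo (0 : ℝ) 1, t ^ (-(p₁ + p₂)) *
        ((a₁ * Real.cos (c₁ * Real.log t) - b₁ * Real.sin (c₁ * Real.log t)) *
         (a₂ * Real.cos (c₂ * Real.log t) - b₂ * Real.sin (c₂ * Real.log t))))) := by
  set G : ℝ → ℝ := fun t =>
    (a₁ * Real.cos (c₁ * Real.log t) - b₁ * Real.sin (c₁ * Real.log t)) *
    (a₂ * Real.cos (c₂ * Real.log t) - b₂ * Real.sin (c₂ * Real.log t)) with hG
  have hGmeas : Measurable G := by
    apply Measurable.mul <;> apply Measurable.sub <;> apply Measurable.mul <;>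
      first
        | exact measurable_const
        | exact (Real.measurable_cos.comp (measurable_const.mul Real.measurable_log))
        | exact (Real.measurable_sin.comp (measurable_const.mul Real.measurable_log))
  have hlog : ContinuousOn Real.log (Set.Ioi 0) :=
    Real.continuousOn_log.mono (fun x hx => ne_of_gt hx)
  have hGcont : ContinuousOn G (Set.Ioi 0) := by
    apply ContinuousOn.mul <;> apply ContinuousOn.sub <;> apply ContinuousOn.mul <;>
      first
        | exact continuousOn_const
        | exact Real.continuous_cos.comp_continuousOn (continuousOn_const.mul hlog)
        | exact Real.continuous_sin.comp_continuousOn (continuousOn_const.mul hlog)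
  set C : ℝ := (|a₁| + |b₁|) * (|a₂| + |b₂|) with hCdef
  have hC : ∀ t : ℝ, 0 < t → |G t| ≤ C := by
    intro t ht
    rw [hG, abs_mul]
    exact mul_le_mul (trig_bound a₁ b₁ _) (trig_bound a₂ b₂ _) (abs_nonneg _)
      (by positivity)
  obtain ⟨h1, h2⟩ := riemann_aux (p₁ + p₂) hp G hGmeas hGcont C hC
  constructor
  · exact h1
  · refine h2.congr ?_
    intro n
    rcases Nat.eq_zero_or_pos n with hn | hn
    · subst hn; simp
    have hnp : (0:ℝ) < n := by exact_mod_cast hn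
    congr 1
    refine Finset.sum_congr rfl fun j hj => ?_
    have hj1 : 0 < ((j:ℝ) + 1) := by positivity
    have ht0 : (0:ℝ) < ((j:ℝ) + 1) / n := div_pos hj1 hnp
    have hrw : (n : ℝ) / ((j : ℝ) + 1) = (((j:ℝ) + 1) / n)⁻¹ := by
      rw [inv_div]
    rw [hrw, Real.inv_rpow ht0.le, Real.inv_rpow ht0.le, Real.log_inv,
      ← Real.rpow_neg ht0.le, ← Real.rpow_neg ht0.le]
    simp only [mul_neg, Real.cos_neg, Real.sin_neg]
    rw [show -(p₁ + p₂) = -p₁ + -p₂ by ring, Real.rpow_add ht0]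
    ring
end

section
/- Let p, c, α^r, α^c be real numbers with p < 1/2. Then the limit as n → ∞ of (1/n) · ∑_{j=1}^{n} (n/(j+1))^{p} · ( α^r·cos(c·log(n/(j+1))) + α^c·sin(c·log(n/(j+1))) ) exists and equals ( (1−p)·α^r + c·α^c ) / ( (1−p)² + c² ). -/
open Real Filter

open MeasureTheory intervalIntegral

-- value of the step function on a cell
lemma step_cell (n : ℕ) (hn : 1 ≤ n) (k : ℕ) (x : ℝ)
    (hx : x ∈ Set.Ioc ((k : ℝ) / n) (((k : ℝ) + 1) / n)) :
    (⌈x * (n : ℝ)⌉ : ℝ) = (k : ℝ) + 1 := by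
  have hn' : (0 : ℝ) < n := by exact_mod_cast hn
  have h1 : (k : ℝ) < x * n := by
    have := hx.1
    rw [div_lt_iff₀ hn'] at this
    linarith
  have h2 : x * n ≤ (k : ℝ) + 1 := (le_div_iff₀ hn').mp hx.2
  have : ⌈x * (n : ℝ)⌉ = (k : ℤ) + 1 := by
    rw [Int.ceil_eq_iff]
    constructor
    · push_cast; linarith
    · push_cast; linarith
  rw [this]; push_cast; ring

lemma key (s : ℂ) (hs : s.re < 1) :
    Tendsto (fun n : ℕ => ((1 / (n : ℝ) : ℝ) : ℂ) * ∑ j ∈ Finset.Icc 1 n,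
      ((((j : ℝ) + 1) / (n : ℝ) : ℝ) : ℂ) ^ (-s)) atTop (nhds (1 / (1 - s))) := by
  set p : ℝ := s.re with hp
  set F : ℕ → ℝ → ℂ := fun n x => (((((⌈x * (n : ℝ)⌉ : ℤ) : ℝ) + 1) / (n : ℝ) : ℝ) : ℂ) ^ (-s)
    with hF
  set bound : ℝ → ℝ := fun x => x ^ (-p) + (3 : ℝ) ^ (-p) with hbound
  have hmeas : ∀ n : ℕ, AEStronglyMeasurable (F n) (volume.restrict (Set.Ioc (0:ℝ) 1)) := by
    intro n
    have : Measurable (F n) := by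
      have h1 : Measurable fun x : ℝ => (⌈x * (n : ℝ)⌉ : ℤ) :=
        (measurable_id.mul_const _).ceil
      exact (measurable_from_top
        (f := fun z : ℤ => ((((z : ℝ) + 1) / (n : ℝ) : ℝ) : ℂ) ^ (-s))).comp h1
    exact this.aestronglyMeasurable
  have hbound_int : Integrable bound (volume.restrict (Set.Ioc (0:ℝ) 1)) := by
    apply Integrable.add
    · rw [← IntegrableOn, ← intervalIntegrable_iff_integrableOn_Ioc_of_le zero_le_one]
      exact intervalIntegrable_rpow' (by linarith)
    · exact integrable_const _
  have hb1 : ∀ x ∈ Set.Ioc (0:ℝ) 1, (1:ℝ) ≤ bound x := by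
    intro x hx
    rcases le_or_gt 0 p with h | h
    · have h1 : (1:ℝ) ≤ x ^ (-p) :=
        Real.one_le_rpow_of_pos_of_le_one_of_nonpos hx.1 hx.2 (neg_nonpos.mpr h)
      have h2 : (0:ℝ) ≤ (3:ℝ) ^ (-p) := Real.rpow_nonneg (by norm_num) _
      simp only [hbound]; linarith
    · have h1 : (1:ℝ) ≤ (3:ℝ) ^ (-p) :=
        Real.one_le_rpow (by norm_num) (by linarith)
      have h2 : (0:ℝ) ≤ x ^ (-p) := Real.rpow_nonneg hx.1.le _
      simp only [hbound]; linarith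
  have h_bound : ∀ n : ℕ, ∀ᵐ x ∂(volume.restrict (Set.Ioc (0:ℝ) 1)), ‖F n x‖ ≤ bound x := by
    intro n
    rw [ae_restrict_iff' measurableSet_Ioc]
    refine ae_of_all _ fun x hx => ?_
    rcases Nat.eq_zero_or_pos n with rfl | hn
    · have : F 0 x = ((0:ℝ) : ℂ) ^ (-s) := by
        simp [hF]
      rw [this]
      rcases eq_or_ne (-s) 0 with h0 | h0
      · rw [h0, Complex.cpow_zero]; simpa using hb1 x hx
      · rw [Complex.ofReal_zero, Complex.zero_cpow h0]
        simpa using le_trans zero_le_one (hb1 x hx)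
    · have hn' : (0:ℝ) < n := by exact_mod_cast hn
      set t : ℝ := (((⌈x * (n : ℝ)⌉ : ℤ) : ℝ) + 1) / (n : ℝ) with ht
      have hxt : x < t := by
        rw [ht, lt_div_iff₀ hn']
        have := Int.le_ceil (x * (n:ℝ))
        linarith
      have ht3 : t ≤ 3 := by
        rw [ht, div_le_iff₀ hn']
        have h1 := Int.ceil_lt_add_one (x * (n:ℝ))
        have h2 : (1:ℝ) ≤ (n:ℝ) := by exact_mod_cast hn
        nlinarith [hx.2, hx.1]
      have ht0 : 0 < t := hx.1.trans hxt
      have hnorm : ‖F n x‖ = t ^ (-p) := by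
        rw [hF]
        rw [Complex.norm_cpow_eq_rpow_re_of_pos ht0]
        simp [hp]
      rw [hnorm]
      rcases le_or_gt 0 p with h | h
      · have h1 : t ^ (-p) ≤ x ^ (-p) :=
          Real.rpow_le_rpow_of_nonpos hx.1 hxt.le (neg_nonpos.mpr h)
        have h2 : (0:ℝ) ≤ (3:ℝ) ^ (-p) := Real.rpow_nonneg (by norm_num) _
        simp only [hbound]; linarith
      · have h1 : t ^ (-p) ≤ (3:ℝ) ^ (-p) :=
          Real.rpow_le_rpow ht0.le ht3 (by linarith)
        have h2 : (0:ℝ) ≤ x ^ (-p) := Real.rpow_nonneg hx.1.le _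
        simp only [hbound]; linarith
  have h_lim : ∀ᵐ x ∂(volume.restrict (Set.Ioc (0:ℝ) 1)),
      Tendsto (fun n => F n x) atTop (nhds (((x : ℝ) : ℂ) ^ (-s))) := by
    rw [ae_restrict_iff' measurableSet_Ioc]
    refine ae_of_all _ fun x hx => ?_
    have htend : Tendsto (fun n : ℕ => (((⌈x * (n : ℝ)⌉ : ℤ) : ℝ) + 1) / (n : ℝ))
        atTop (nhds x) := by
      have hup : Tendsto (fun n : ℕ => x + 2 / (n:ℝ)) atTop (nhds x) := by
        have h0 : Tendsto (fun n : ℕ => (2:ℝ) / n) atTop (nhds 0) :=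
          tendsto_const_div_atTop_nhds_zero_nat 2
        have := (tendsto_const_nhds (x := x) (f := (atTop : Filter ℕ))).add h0
        simpa using this
      refine tendsto_of_tendsto_of_tendsto_of_le_of_le' tendsto_const_nhds hup ?_ ?_
      · filter_upwards [eventually_ge_atTop 1] with n hn
        have hn' : (0:ℝ) < n := by exact_mod_cast hn
        rw [le_div_iff₀ hn']
        have := Int.le_ceil (x * (n:ℝ))
        linarith
      · filter_upwards [eventually_ge_atTop 1] with n hn
        have hn' : (0:ℝ) < n := by exact_mod_cast hn
        rw [div_le_iff₀ hn']
        have h1 := Int.ceil_lt_add_one (x * (n:ℝ))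
        have h2 : (2:ℝ) / n * n = 2 := div_mul_cancel₀ 2 hn'.ne'
        nlinarith
    have hcont : ContinuousAt (fun y : ℝ => ((y : ℝ) : ℂ) ^ (-s)) x :=
      Complex.continuousAt_ofReal_cpow_const x (-s) (Or.inr hx.1.ne')
    exact (hcont.tendsto.comp htend)
  have hDCT := tendsto_integral_of_dominated_convergence bound hmeas hbound_int h_bound h_lim
  have hs1 : (1:ℂ) - s ≠ 0 := by
    intro h
    have := congrArg Complex.re h
    simp [hp] at this
    linarith
  have hIval : (∫ x in Set.Ioc (0:ℝ) 1, ((x : ℝ) : ℂ) ^ (-s)) = 1 / (1 - s) := by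
    rw [← intervalIntegral.integral_of_le zero_le_one]
    rw [integral_cpow (Or.inl (by simp [hp]; linarith))]
    have h0 : (-s) + 1 ≠ 0 := by
      intro h
      apply hs1
      linear_combination h
    rw [Complex.ofReal_one, Complex.one_cpow, Complex.ofReal_zero, Complex.zero_cpow h0]
    rw [show (-s) + 1 = 1 - s by ring]
    ring
  have hsum : ∀ n : ℕ, 1 ≤ n → (∫ x in Set.Ioc (0:ℝ) 1, F n x) =
      ((1 / (n : ℝ) : ℝ) : ℂ) * ∑ j ∈ Finset.Icc 1 n,
        ((((j : ℝ) + 1) / (n : ℝ) : ℝ) : ℂ) ^ (-s) := by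
    intro n hn
    have hn' : (0:ℝ) < n := by exact_mod_cast hn
    have hcell : ∀ k : ℕ, ∫ x in ((k:ℝ)/n)..(((k:ℝ)+1)/n), F n x =
        (((1:ℝ)/(n:ℝ)) : ℂ) * (((((k:ℝ)+2)/(n:ℝ)) : ℝ) : ℂ) ^ (-s) := by
      intro k
      have hle : (k:ℝ)/n ≤ ((k:ℝ)+1)/n := by
        apply div_le_div_of_nonneg_right (by linarith) hn'.le
      rw [intervalIntegral.integral_of_le hle]
      have heq : Set.EqOn (F n) (fun _ => (((((k:ℝ)+2)/(n:ℝ)) : ℝ) : ℂ) ^ (-s))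
          (Set.Ioc ((k:ℝ)/n) (((k:ℝ)+1)/n)) := by
        intro x hxmem
        have := step_cell n hn k x hxmem
        simp only [hF]
        rw [this, show (k:ℝ) + 1 + 1 = (k:ℝ) + 2 by ring]
      rw [MeasureTheory.setIntegral_congr_fun measurableSet_Ioc heq,
        MeasureTheory.setIntegral_const]
      rw [Real.volume_real_Ioc, show ((k:ℝ)+1)/n - (k:ℝ)/n = 1/n by field_simp; ring,
        max_eq_left (by positivity), Complex.real_smul, Complex.ofReal_div,
        Complex.ofReal_one]
    have hintg : ∀ k : ℕ, k < n →
        IntervalIntegrable (F n) volume ((k:ℝ)/n) (((k:ℝ)+1)/n) := by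
      intro k _
      have hle : (k:ℝ)/n ≤ ((k:ℝ)+1)/n := by
        apply div_le_div_of_nonneg_right (by linarith) hn'.le
      rw [intervalIntegrable_iff_integrableOn_Ioc_of_le hle]
      have hconst : IntegrableOn (fun _ : ℝ => (((((k:ℝ)+2)/(n:ℝ)) : ℝ) : ℂ) ^ (-s))
          (Set.Ioc ((k:ℝ)/n) (((k:ℝ)+1)/n)) volume :=
        integrableOn_const measure_Ioc_lt_top.ne
      apply hconst.congr
      rw [Filter.EventuallyEq, ae_restrict_iff' measurableSet_Ioc]
      refine ae_of_all _ fun x hxmem => ?_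
      have := step_cell n hn k x hxmem
      simp only [hF]
      rw [this, show (k:ℝ) + 1 + 1 = (k:ℝ) + 2 by ring]
    have hadj := intervalIntegral.sum_integral_adjacent_intervals
      (f := F n) (μ := volume) (a := fun k : ℕ => (k:ℝ)/n) (n := n)
      (fun k hk => by push_cast; exact hintg k hk)
    have h00 : ((0:ℕ):ℝ)/n = 0 := by norm_num
    have h11 : ((n:ℕ):ℝ)/n = 1 := div_self hn'.ne'
    beta_reduce at hadj
    rw [h00, h11, intervalIntegral.integral_of_le zero_le_one] at hadj
    rw [← hadj]
    have hterm : ∀ k ∈ Finset.range n, ∫ x in (((k:ℕ):ℝ)/n)..((((k+1:ℕ)):ℝ)/n), F n x =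
        (((1:ℝ)/(n:ℝ)) : ℂ) * (((((k:ℝ)+2)/(n:ℝ)) : ℝ) : ℂ) ^ (-s) := by
      intro k _
      have := hcell k
      push_cast at this ⊢
      exact this
    rw [Finset.sum_congr rfl hterm, ← Finset.mul_sum]
    congr 1
    · push_cast; ring
    · rw [← Finset.Ico_add_one_right_eq_Icc, Finset.sum_Ico_eq_sum_range]
      apply Finset.sum_congr (by norm_num)
      intro k _
      congr 2
      push_cast
      ring
  rw [hIval] at hDCT
  apply hDCT.congr'
  filter_upwards [eventually_ge_atTop 1] with n hn
  exact hsum n hn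

/-- For reals `p < 1/2`, `c`, `αʳ`, `αᶜ`, the Cesàro averages
`(1/n) ∑_{j=1}^n (n/(j+1))^p (αʳ cos(c log(n/(j+1))) + αᶜ sin(c log(n/(j+1))))`
converge to `((1−p) αʳ + c αᶜ) / ((1−p)² + c²)`. -/
theorem tendsto_cesaro_rpow_trig (p c αr αc : ℝ) (hp : p < 1 / 2) :
    Tendsto
      (fun n : ℕ => (1 / (n : ℝ)) * ∑ j ∈ Finset.Icc 1 n,
        ((n : ℝ) / ((j : ℝ) + 1)) ^ p *
          (αr * Real.cos (c * Real.log ((n : ℝ) / ((j : ℝ) + 1))) +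
           αc * Real.sin (c * Real.log ((n : ℝ) / ((j : ℝ) + 1)))))
      atTop (nhds (((1 - p) * αr + c * αc) / ((1 - p) ^ 2 + c ^ 2))) := by
  set s : ℂ := ⟨p, c⟩ with hsdef
  have hs : s.re < 1 := by
    show p < 1
    linarith
  have hkey := key s hs
  set S : ℕ → ℂ := fun n : ℕ => ((1 / (n : ℝ) : ℝ) : ℂ) * ∑ j ∈ Finset.Icc 1 n,
      ((((j : ℝ) + 1) / (n : ℝ) : ℝ) : ℂ) ^ (-s) with hS
  set w : ℂ := 1 / (1 - s) with hw
  have h1 : Tendsto (fun n => αr * (S n).re + αc * (S n).im) atTop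
      (nhds (αr * w.re + αc * w.im)) := by
    exact (((Complex.continuous_re.tendsto w).comp hkey).const_mul αr).add
      (((Complex.continuous_im.tendsto w).comp hkey).const_mul αc)
  -- identify the limit value
  have hp1 : (0:ℝ) < 1 - p := by linarith
  have hD : (0:ℝ) < (1 - p) ^ 2 + c ^ 2 :=
    add_pos_of_pos_of_nonneg (pow_pos hp1 2) (sq_nonneg c)
  have h1s : (1 : ℂ) - s = ⟨1 - p, -c⟩ := by
    apply Complex.ext <;> simp [hsdef]
  have hwre : w.re = (1 - p) / ((1 - p) ^ 2 + c ^ 2) := by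
    rw [hw, one_div, h1s, Complex.inv_re, Complex.normSq_mk]
    norm_num; ring_nf
  have hwim : w.im = c / ((1 - p) ^ 2 + c ^ 2) := by
    rw [hw, one_div, h1s, Complex.inv_im, Complex.normSq_mk]
    norm_num; ring_nf
  have hval : αr * w.re + αc * w.im = ((1 - p) * αr + c * αc) / ((1 - p) ^ 2 + c ^ 2) := by
    rw [hwre, hwim]
    field_simp
  rw [hval] at h1
  apply h1.congr'
  filter_upwards [eventually_ge_atTop 1] with n hn
  have hn' : (0:ℝ) < n := by exact_mod_cast hn
  -- expand S n
  have hterm : ∀ j ∈ Finset.Icc 1 n,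
      ((n : ℝ) / ((j : ℝ) + 1)) ^ p *
          (αr * Real.cos (c * Real.log ((n : ℝ) / ((j : ℝ) + 1))) +
           αc * Real.sin (c * Real.log ((n : ℝ) / ((j : ℝ) + 1)))) =
      αr * (((((j : ℝ) + 1) / (n : ℝ) : ℝ) : ℂ) ^ (-s)).re
        + αc * (((((j : ℝ) + 1) / (n : ℝ) : ℝ) : ℂ) ^ (-s)).im := by
    intro j hj
    set r : ℝ := ((j : ℝ) + 1) / (n : ℝ) with hr
    have hr0 : 0 < r := by positivity
    have hinv : (n : ℝ) / ((j : ℝ) + 1) = r⁻¹ := by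
      rw [hr, inv_div]
    have hz : (((r : ℝ) : ℂ) ^ (-s)) =
        Complex.exp ((Real.log r : ℂ) * (-s)) := by
      rw [Complex.cpow_def_of_ne_zero (by exact_mod_cast hr0.ne'), Complex.ofReal_log hr0.le]
    have hzre : (((r : ℝ) : ℂ) ^ (-s)).re =
        Real.exp (Real.log r * (-p)) * Real.cos (Real.log r * (-c)) := by
      rw [hz, Complex.exp_re]
      simp [hsdef, Complex.mul_re]
    have hzim : (((r : ℝ) : ℂ) ^ (-s)).im =
        Real.exp (Real.log r * (-p)) * Real.sin (Real.log r * (-c)) := by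
      rw [hz, Complex.exp_im]
      simp [hsdef, Complex.mul_im]
    rw [hinv, hzre, hzim, Real.log_inv, Real.rpow_def_of_pos (inv_pos.mpr hr0), Real.log_inv]
    rw [show -Real.log r * p = Real.log r * (-p) by ring,
      show c * -Real.log r = Real.log r * (-c) by ring]
    ring
  rw [Finset.sum_congr rfl hterm]
  rw [hS]
  simp only [Complex.re_ofReal_mul, Complex.im_ofReal_mul, Complex.re_sum, Complex.im_sum]
  rw [Finset.sum_add_distrib, ← Finset.mul_sum, ← Finset.mul_sum]
  ring
end

section
/- Let {X_{n,j} : n ≥ 1, 1 ≤ j ≤ n} be a triangular array of square-integrable real random variables on a probability space. Suppose that the sequence of random variables T_n := ∑_{j=1}^{n} X_{n,j}² is uniformly integrable, and that max_{1≤j≤n} |X_{n,j}| → 0 in probability as n → ∞. Then the unconditional Lindeberg condition holds: for every ε > 0, ∑_{j=1}^{n} E[ X_{n,j}² · 1{|X_{n,j}| > ε} ] → 0 as n → ∞. -/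
open MeasureTheory Filter

/-- If the row sums of squares `T_n = ∑_{j=1}^n X_{n,j}²` of a triangular array of
square-integrable random variables are uniformly integrable, and
`max_{1≤j≤n} |X_{n,j}| → 0` in probability, then the unconditional Lindeberg condition
holds: for every `ε > 0`, `∑_{j=1}^n E[X_{n,j}² 1{|X_{n,j}| > ε}] → 0`. -/
theorem lindeberg_of_uniformIntegrable_max_to_zero
    {Ω : Type*} {m0 : MeasurableSpace Ω} (μ : Measure Ω) [IsProbabilityMeasure μ]
    (X : ℕ → ℕ → Ω → ℝ)
    (hL2 : ∀ n j, MemLp (X n j) 2 μ)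
    (hUI : ∀ δ : ℝ, 0 < δ → ∃ L : ℝ, ∀ n : ℕ,
      ∫ ω in {ω | L < |∑ j ∈ Finset.Icc 1 n, (X n j ω) ^ 2|},
        |∑ j ∈ Finset.Icc 1 n, (X n j ω) ^ 2| ∂μ ≤ δ)
    (hmax : ∀ ε : ℝ, 0 < ε →
      Tendsto (fun n : ℕ => μ {ω | ∃ j ∈ Finset.Icc 1 n, ε < |X n j ω|})
        atTop (nhds 0)) :
    ∀ ε : ℝ, 0 < ε →
      Tendsto
        (fun n : ℕ => ∑ j ∈ Finset.Icc 1 n,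
          ∫ ω in {ω | ε < |X n j ω|}, (X n j ω) ^ 2 ∂μ)
        atTop (nhds 0) := by
  intro ε hε
  set S : ℕ → Ω → ℝ := fun n ω => ∑ j ∈ Finset.Icc 1 n, (X n j ω) ^ 2 with hS_def
  have hSint : ∀ n, Integrable (S n) μ := fun n =>
    integrable_finset_sum _ (fun j _ => (hL2 n j).integrable_sq)
  have hSnn : ∀ n ω, 0 ≤ S n ω := fun n ω => Finset.sum_nonneg fun j _ => sq_nonneg _
  set A : ℕ → Set Ω := fun n => {ω | ∃ j ∈ Finset.Icc 1 n, ε < |X n j ω|} with hA_def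
  rw [NormedAddCommGroup.tendsto_nhds_zero]
  intro δ hδ
  obtain ⟨L, hL⟩ := hUI (δ / 2) (by positivity)
  set L' : ℝ := max L 0 with hL'_def
  have hL'nn : 0 ≤ L' := le_max_right _ _
  have hUI' : ∀ n, ∫ ω in {ω | L' < |S n ω|}, |S n ω| ∂μ ≤ δ / 2 := by
    intro n
    refine le_trans ?_ (hL n)
    refine setIntegral_mono_set ((hSint n).abs.integrableOn) ?_ ?_
    · exact Filter.Eventually.of_forall fun ω => abs_nonneg _
    · refine Filter.Eventually.of_forall fun ω hω => ?_
      exact lt_of_le_of_lt (le_max_left L 0) hω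
  -- μ(A n).toReal → 0
  have htoReal : Tendsto (fun n => (μ (A n)).toReal) atTop (nhds 0) := by
    exact (ENNReal.tendsto_toReal (by simp : (0 : ENNReal) ≠ ⊤)).comp (hmax ε hε)
  have hev : ∀ᶠ n in atTop, L' * (μ (A n)).toReal < δ / 2 := by
    have h2 : Tendsto (fun n => L' * (μ (A n)).toReal) atTop (nhds 0) := by
      simpa using htoReal.const_mul L'
    exact h2.eventually (gt_mem_nhds (by linarith))
  filter_upwards [hev] with n hn
  have hFnn : 0 ≤ ∑ j ∈ Finset.Icc 1 n, ∫ ω in {ω | ε < |X n j ω|}, (X n j ω) ^ 2 ∂μ :=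
    Finset.sum_nonneg fun j _ => integral_nonneg fun ω => sq_nonneg _
  rw [Real.norm_of_nonneg hFnn]
  -- step 1: bound by ∫_{A n} S n
  have hstep1 : ∑ j ∈ Finset.Icc 1 n, ∫ ω in {ω | ε < |X n j ω|}, (X n j ω) ^ 2 ∂μ
      ≤ ∫ ω in A n, S n ω ∂μ := by
    have h1 : ∀ j ∈ Finset.Icc 1 n,
        ∫ ω in {ω | ε < |X n j ω|}, (X n j ω) ^ 2 ∂μ ≤ ∫ ω in A n, (X n j ω) ^ 2 ∂μ := by
      intro j hj
      refine setIntegral_mono_set ((hL2 n j).integrable_sq.integrableOn) ?_ ?_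
      · exact Filter.Eventually.of_forall fun ω => sq_nonneg _
      · exact Filter.Eventually.of_forall fun ω hω => ⟨j, hj, hω⟩
    refine le_trans (Finset.sum_le_sum h1) ?_
    rw [← integral_finset_sum]
    intro j _
    exact (hL2 n j).integrable_sq.integrableOn
  refine lt_of_le_of_lt (le_trans hstep1 ?_) (by linarith : δ / 2 + L' * (μ (A n)).toReal < δ)
  -- measurable modification of S n
  obtain ⟨S', hS'sm, hSS'⟩ : ∃ S' : Ω → ℝ, StronglyMeasurable S' ∧ S n =ᵐ[μ] S' :=
    ⟨(hSint n).1.mk (S n), (hSint n).1.stronglyMeasurable_mk, (hSint n).1.ae_eq_mk⟩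
  set B : Set Ω := {ω | L' < |S' ω|} with hB_def
  have hB : MeasurableSet B := measurableSet_lt measurable_const hS'sm.measurable.abs
  have hsplit : ∫ ω in A n, S n ω ∂μ
      = ∫ ω in B ∩ A n, S n ω ∂μ + ∫ ω in Bᶜ ∩ A n, S n ω ∂μ := by
    rw [← Measure.restrict_restrict hB, ← Measure.restrict_restrict hB.compl]
    exact (integral_add_compl hB ((hSint n).integrableOn)).symm
  rw [hsplit]
  have hbound1 : ∫ ω in B ∩ A n, S n ω ∂μ ≤ δ / 2 := by
    have heq : ∫ ω in B ∩ A n, S n ω ∂μ = ∫ ω in B ∩ A n, |S n ω| ∂μ := by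
      refine integral_congr_ae (Filter.Eventually.of_forall fun ω => ?_)
      exact (abs_of_nonneg (hSnn n ω)).symm
    rw [heq]
    refine le_trans ?_ (hUI' n)
    refine setIntegral_mono_set ((hSint n).abs.integrableOn) ?_ ?_
    · exact Filter.Eventually.of_forall fun ω => abs_nonneg _
    · refine hSS'.mono fun ω hω h => ?_
      show L' < |S n ω|
      rw [hω]
      exact h.1
  have hbound2 : ∫ ω in Bᶜ ∩ A n, S n ω ∂μ ≤ L' * (μ (A n)).toReal := by
    have hle : ∀ᵐ ω ∂(μ.restrict (Bᶜ ∩ A n)), S n ω ≤ L' := by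
      have h1 : ∀ᵐ ω ∂(μ.restrict Bᶜ), S n ω ≤ L' := by
        have h2 : ∀ᵐ ω ∂(μ.restrict Bᶜ), S n ω = S' ω :=
          ae_restrict_of_ae hSS'
        have h3 : ∀ᵐ ω ∂(μ.restrict Bᶜ), S' ω ≤ L' := by
          rw [ae_restrict_iff' hB.compl]
          refine Filter.Eventually.of_forall fun ω hω => ?_
          have : ¬ L' < |S' ω| := hω
          exact le_trans (le_abs_self _) (not_lt.mp this)
        filter_upwards [h2, h3] with ω h2 h3
        rw [h2]; exact h3
      exact h1.filter_mono (ae_mono (Measure.restrict_mono Set.inter_subset_left le_rfl))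
    have := integral_mono_ae ((hSint n).integrableOn)
      (integrable_const L' : Integrable (fun _ => L') (μ.restrict (Bᶜ ∩ A n))) hle
    refine le_trans this ?_
    rw [setIntegral_const, smul_eq_mul, mul_comm]
    refine mul_le_mul_of_nonneg_left ?_ hL'nn
    exact ENNReal.toReal_mono (measure_ne_top μ _) (measure_mono Set.inter_subset_right)
  linarith
end

section
/- Let θ ∈ ℝ and let (W_j)_{j≥1} be integrable real random variables on a probability space with E[|W_j − θ|] → 0 as j → ∞. Let p₁, p₂ be real numbers with p₁ + p₂ < 1 and let K > 0. For each n ≥ 1 let b^{(1)}_{j,n} and b^{(2)}_{j,n} (1 ≤ j ≤ n) be real numbers with |b^{(1)}_{j,n}| ≤ K·(n/(j+1))^{p₁} and |b^{(2)}_{j,n}| ≤ K·(n/(j+1))^{p₂}. Then E[ | (1/n) · ∑_{j=1}^{n} b^{(1)}_{j,n} · b^{(2)}_{j,n} · (W_j − θ) | ] → 0 as n → ∞. -/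
open MeasureTheory Filter

/-- Uniform bound on the weighted coefficient sums. -/
lemma aux_coef_sum_bound {p : ℝ} (hp : p < 1) :
    ∃ C : ℝ, 0 < C ∧ ∀ n : ℕ,
      ∑ j ∈ Finset.Icc 1 n, (1 / (n : ℝ)) * ((n : ℝ) / ((j : ℝ) + 1)) ^ p ≤ C := by
  rcases le_or_gt p 0 with hp0 | hp0
  · refine ⟨(1/2 : ℝ) ^ p, Real.rpow_pos_of_pos (by norm_num) p, fun n => ?_⟩
    rcases Nat.eq_zero_or_pos n with rfl | hn
    · simp
      positivity
    have hn0 : (0:ℝ) < n := by exact_mod_cast hn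
    calc ∑ j ∈ Finset.Icc 1 n, (1 / (n : ℝ)) * ((n : ℝ) / ((j : ℝ) + 1)) ^ p
        ≤ ∑ _j ∈ Finset.Icc 1 n, (1 / (n : ℝ)) * (1/2 : ℝ) ^ p := by
          apply Finset.sum_le_sum
          intro j hj
          obtain ⟨hj1, hjn⟩ := Finset.mem_Icc.1 hj
          have hj1' : (1:ℝ) ≤ (j:ℝ) := by exact_mod_cast hj1
          have hjn' : (j:ℝ) ≤ (n:ℝ) := by exact_mod_cast hjn
          have hjpos : (0:ℝ) < (j:ℝ) + 1 := by linarith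
          have hhalf : (1/2 : ℝ) ≤ (n:ℝ) / ((j:ℝ) + 1) := by
            rw [le_div_iff₀ hjpos]
            linarith
          have := Real.rpow_le_rpow_of_nonpos (by norm_num : (0:ℝ) < 1/2) hhalf hp0
          exact mul_le_mul_of_nonneg_left this (by positivity)
      _ = (1/2 : ℝ) ^ p := by
          rw [Finset.sum_const, Nat.card_Icc]
          simp only [nsmul_eq_mul]
          have : ((n + 1 - 1 : ℕ) : ℝ) = (n : ℝ) := by push_cast [Nat.add_sub_cancel]; ring
          rw [this]
          field_simp
  · have hCpos : (0:ℝ) < 2 ^ (1-p) / (1-p) :=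
      div_pos (Real.rpow_pos_of_pos two_pos _) (by linarith)
    refine ⟨2 ^ (1-p) / (1-p), hCpos, fun n => ?_⟩
    rcases Nat.eq_zero_or_pos n with rfl | hn
    · simp
      exact hCpos.le
    have hn0 : (0:ℝ) < n := by exact_mod_cast hn
    have hn1 : (1:ℝ) ≤ n := by exact_mod_cast hn
    have hrw : ∀ j : ℕ, (1 / (n : ℝ)) * ((n : ℝ) / ((j : ℝ) + 1)) ^ p
        = (n:ℝ) ^ (p-1) * ((j:ℝ) + 1) ^ (-p) := by
      intro j
      have hj : (0:ℝ) < (j:ℝ) + 1 := by positivity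
      rw [Real.div_rpow hn0.le hj.le, Real.rpow_sub hn0, Real.rpow_one, Real.rpow_neg hj.le]
      ring
    simp_rw [hrw]
    rw [← Finset.mul_sum]
    have hsum : ∑ j ∈ Finset.Icc 1 n, ((j:ℝ) + 1) ^ (-p) ≤ (2 * (n:ℝ)) ^ (1-p) / (1-p) := by
      have hanti : AntitoneOn (fun x : ℝ => x ^ (-p)) (Set.Icc 1 (1 + (n:ℝ))) := by
        intro x hx y hy hxy
        exact Real.rpow_le_rpow_of_nonpos (lt_of_lt_of_le one_pos hx.1) hxy
          (by linarith)
      have hle := hanti.sum_le_integral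
      have hint : ∫ x in (1:ℝ)..(1 + (n:ℝ)), x ^ (-p)
          = ((1 + (n:ℝ)) ^ (-p + 1) - 1 ^ (-p + 1)) / (-p + 1) :=
        integral_rpow (Or.inl (by linarith))
      have heq : ∑ j ∈ Finset.Icc 1 n, ((j:ℝ) + 1) ^ (-p)
          = ∑ i ∈ Finset.range n, ((1:ℝ) + ((i + 1 : ℕ) : ℝ)) ^ (-p) := by
        rw [show Finset.Icc 1 n = Finset.Ico 1 (n+1) by rw [Finset.Ico_add_one_right_eq_Icc],
          Finset.sum_Ico_eq_sum_range]
        simp only [Nat.add_sub_cancel]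
        apply Finset.sum_congr rfl
        intro i _
        congr 1
        push_cast
        ring
      rw [heq]
      refine le_trans hle ?_
      rw [hint]
      rw [Real.one_rpow]
      have h2n : (1 + (n:ℝ)) ^ (-p+1) ≤ (2 * (n:ℝ)) ^ (-p+1) := by
        apply Real.rpow_le_rpow (by linarith) (by linarith) (by linarith)
      rw [show -p + 1 = 1 - p by ring] at h2n ⊢
      apply div_le_div_of_nonneg_right ?_ (by linarith) |>.trans_eq rfl
      · linarith
    calc (n:ℝ) ^ (p-1) * ∑ j ∈ Finset.Icc 1 n, ((j:ℝ) + 1) ^ (-p)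
        ≤ (n:ℝ) ^ (p-1) * ((2 * (n:ℝ)) ^ (1-p) / (1-p)) :=
          mul_le_mul_of_nonneg_left hsum (Real.rpow_nonneg hn0.le _)
      _ = ((n:ℝ) ^ (p-1) * (n:ℝ) ^ (1-p)) * 2 ^ (1-p) / (1-p) := by
          rw [Real.mul_rpow (by norm_num) hn0.le]
          ring
      _ = 2 ^ (1-p) / (1-p) := by
          rw [← Real.rpow_add hn0]
          norm_num

/-- Weighted Cesàro-type lemma. -/
lemma aux_cesaro {p : ℝ} (hp : p < 1) (e : ℕ → ℝ) (he0 : ∀ j, 0 ≤ e j)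
    (he : Tendsto e atTop (nhds 0)) :
    Tendsto (fun n : ℕ => ∑ j ∈ Finset.Icc 1 n,
      (1 / (n : ℝ)) * ((n : ℝ) / ((j : ℝ) + 1)) ^ p * e j) atTop (nhds 0) := by
  obtain ⟨C, hC, hCsum⟩ := aux_coef_sum_bound hp
  have hterm : ∀ (n j : ℕ), 0 ≤ (1 / (n : ℝ)) * ((n : ℝ) / ((j : ℝ) + 1)) ^ p * e j := by
    intro n j
    have := he0 j
    have h1 : (0:ℝ) ≤ (n:ℝ) / ((j:ℝ)+1) := by positivity
    have h2 : (0:ℝ) ≤ ((n:ℝ) / ((j:ℝ)+1)) ^ p := Real.rpow_nonneg h1 p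
    positivity
  rw [Metric.tendsto_atTop]
  intro ε hε
  have hε2C : 0 < ε / (2 * C) := by positivity
  obtain ⟨m, hm⟩ := (Metric.tendsto_atTop.1 he) (ε / (2 * C)) hε2C
  have hA : Tendsto (fun n : ℕ => ∑ j ∈ Finset.Icc 1 m,
      (1 / (n : ℝ)) * ((n : ℝ) / ((j : ℝ) + 1)) ^ p * e j) atTop (nhds 0) := by
    have hjt : ∀ j ∈ Finset.Icc 1 m, Tendsto (fun n : ℕ =>
        (1 / (n : ℝ)) * ((n : ℝ) / ((j : ℝ) + 1)) ^ p * e j) atTop (nhds 0) := by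
      intro j _
      have hj : (0:ℝ) < (j:ℝ) + 1 := by positivity
      have h1 : Tendsto (fun n : ℕ => (n:ℝ) ^ (p-1)) atTop (nhds 0) := by
        have := (tendsto_rpow_neg_atTop (by linarith : (0:ℝ) < 1-p)).comp
          (tendsto_natCast_atTop_atTop (R := ℝ))
        simpa [neg_sub, Function.comp_def] using this
      have h2 : Tendsto (fun n : ℕ => (n:ℝ) ^ (p-1) * (((j:ℝ)+1) ^ (-p) * e j)) atTop
          (nhds 0) := by
        simpa using h1.mul_const (((j:ℝ)+1) ^ (-p) * e j)
      refine Tendsto.congr' ?_ h2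
      filter_upwards [eventually_ge_atTop 1] with n hn
      have hn0 : (0:ℝ) < n := by exact_mod_cast hn
      rw [Real.div_rpow hn0.le hj.le, Real.rpow_sub hn0, Real.rpow_one, Real.rpow_neg hj.le]
      ring
    simpa using tendsto_finset_sum (Finset.Icc 1 m) hjt
  obtain ⟨N₁, hN₁⟩ := (Metric.tendsto_atTop.1 hA) (ε/2) (by positivity)
  refine ⟨max N₁ (m+1), fun n hn => ?_⟩
  have hnN₁ : N₁ ≤ n := le_trans (le_max_left _ _) hn
  have hmn : m + 1 ≤ n := le_trans (le_max_right _ _) hn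
  have hsplit : ∑ j ∈ Finset.Icc 1 n, (1 / (n : ℝ)) * ((n : ℝ) / ((j : ℝ) + 1)) ^ p * e j
      = (∑ j ∈ Finset.Icc 1 m, (1 / (n : ℝ)) * ((n : ℝ) / ((j : ℝ) + 1)) ^ p * e j)
        + ∑ j ∈ Finset.Ioc m n, (1 / (n : ℝ)) * ((n : ℝ) / ((j : ℝ) + 1)) ^ p * e j := by
    rw [show Finset.Icc 1 n = Finset.Ioc 0 n from (Finset.Icc_add_one_left_eq_Ioc 0 n).symm ▸ rfl,
      show Finset.Icc 1 m = Finset.Ioc 0 m from (Finset.Icc_add_one_left_eq_Ioc 0 m).symm ▸ rfl]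
    exact (Finset.sum_Ioc_consecutive _ (Nat.zero_le m) (by omega)).symm
  have htail : ∑ j ∈ Finset.Ioc m n, (1 / (n : ℝ)) * ((n : ℝ) / ((j : ℝ) + 1)) ^ p * e j
      ≤ ε / 2 := by
    have hsub : Finset.Ioc m n ⊆ Finset.Icc 1 n := by
      intro j hj
      obtain ⟨h1, h2⟩ := Finset.mem_Ioc.1 hj
      exact Finset.mem_Icc.2 ⟨by omega, h2⟩
    calc ∑ j ∈ Finset.Ioc m n, (1 / (n : ℝ)) * ((n : ℝ) / ((j : ℝ) + 1)) ^ p * e j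
        ≤ ∑ j ∈ Finset.Ioc m n, (1 / (n : ℝ)) * ((n : ℝ) / ((j : ℝ) + 1)) ^ p * (ε/(2*C)) := by
          apply Finset.sum_le_sum
          intro j hj
          have hjm : m ≤ j := le_of_lt (Finset.mem_Ioc.1 hj).1
          have hej : e j < ε / (2*C) := by
            have := hm j hjm
            rwa [Real.dist_eq, sub_zero, abs_of_nonneg (he0 j)] at this
          have h1 : (0:ℝ) ≤ (n:ℝ) / ((j:ℝ)+1) := by positivity
          have h2 : (0:ℝ) ≤ ((n:ℝ) / ((j:ℝ)+1)) ^ p := Real.rpow_nonneg h1 p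
          exact mul_le_mul_of_nonneg_left hej.le (by positivity)
      _ = (ε/(2*C)) * ∑ j ∈ Finset.Ioc m n, (1 / (n : ℝ)) * ((n : ℝ) / ((j : ℝ) + 1)) ^ p := by
          rw [← Finset.sum_mul, mul_comm]
      _ ≤ (ε/(2*C)) * ∑ j ∈ Finset.Icc 1 n, (1 / (n : ℝ)) * ((n : ℝ) / ((j : ℝ) + 1)) ^ p := by
          apply mul_le_mul_of_nonneg_left ?_ hε2C.le
          apply Finset.sum_le_sum_of_subset_of_nonneg hsub
          intro j _ _
          have h1 : (0:ℝ) ≤ (n:ℝ) / ((j:ℝ)+1) := by positivity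
          have h2 : (0:ℝ) ≤ ((n:ℝ) / ((j:ℝ)+1)) ^ p := Real.rpow_nonneg h1 p
          positivity
      _ ≤ (ε/(2*C)) * C := mul_le_mul_of_nonneg_left (hCsum n) hε2C.le
      _ = ε / 2 := by field_simp
  have hhead : ∑ j ∈ Finset.Icc 1 m, (1 / (n : ℝ)) * ((n : ℝ) / ((j : ℝ) + 1)) ^ p * e j
      < ε / 2 := by
    have := hN₁ n hnN₁
    rw [Real.dist_eq, sub_zero] at this
    exact lt_of_le_of_lt (le_abs_self _) this
  rw [Real.dist_eq, sub_zero, abs_of_nonneg (Finset.sum_nonneg fun j _ => hterm n j)]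
  rw [hsplit]
  linarith

/-- If `W_j → θ` in `L¹` and the coefficients satisfy `|b⁽¹⁾_{j,n}| ≤ K (n/(j+1))^{p₁}`,
`|b⁽²⁾_{j,n}| ≤ K (n/(j+1))^{p₂}` with `p₁ + p₂ < 1`, then
`E|(1/n) ∑_{j=1}^n b⁽¹⁾_{j,n} b⁽²⁾_{j,n} (W_j − θ)| → 0`. -/
theorem weighted_cesaro_L1_convergence
    {Ω : Type*} {m0 : MeasurableSpace Ω} (μ : Measure Ω) [IsProbabilityMeasure μ]
    (θ : ℝ) (W : ℕ → Ω → ℝ) (hint : ∀ j, Integrable (W j) μ)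
    (hconv : Tendsto (fun j : ℕ => ∫ ω, |W j ω - θ| ∂μ) atTop (nhds 0))
    (p₁ p₂ : ℝ) (hp : p₁ + p₂ < 1) (K : ℝ) (hK : 0 < K)
    (b₁ b₂ : ℕ → ℕ → ℝ)
    (hb₁ : ∀ n j : ℕ, 1 ≤ j → j ≤ n → |b₁ n j| ≤ K * ((n : ℝ) / ((j : ℝ) + 1)) ^ p₁)
    (hb₂ : ∀ n j : ℕ, 1 ≤ j → j ≤ n → |b₂ n j| ≤ K * ((n : ℝ) / ((j : ℝ) + 1)) ^ p₂) :
    Tendsto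
      (fun n : ℕ =>
        ∫ ω, |(1 / (n : ℝ)) * ∑ j ∈ Finset.Icc 1 n, b₁ n j * b₂ n j * (W j ω - θ)| ∂μ)
      atTop (nhds 0) := by
  set p : ℝ := p₁ + p₂ with hpdef
  set e : ℕ → ℝ := fun j => ∫ ω, |W j ω - θ| ∂μ with he_def
  have he0 : ∀ j, 0 ≤ e j := fun j => integral_nonneg fun ω => abs_nonneg _
  have hW : ∀ j, Integrable (fun ω => W j ω - θ) μ := fun j => (hint j).sub (integrable_const θ)
  have hWabs : ∀ j, Integrable (fun ω => |W j ω - θ|) μ := fun j => (hW j).abs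
  have key : ∀ n : ℕ,
      (∫ ω, |(1 / (n : ℝ)) * ∑ j ∈ Finset.Icc 1 n, b₁ n j * b₂ n j * (W j ω - θ)| ∂μ)
      ≤ K^2 * ∑ j ∈ Finset.Icc 1 n, (1 / (n : ℝ)) * ((n : ℝ) / ((j : ℝ) + 1)) ^ p * e j := by
    intro n
    have hfi : Integrable (fun ω => ∑ j ∈ Finset.Icc 1 n, b₁ n j * b₂ n j * (W j ω - θ)) μ :=
      integrable_finset_sum _ fun j _ => (hW j).const_mul _
    have h1 : (∫ ω, |(1 / (n : ℝ)) * ∑ j ∈ Finset.Icc 1 n, b₁ n j * b₂ n j * (W j ω - θ)| ∂μ)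
        ≤ ∫ ω, (1 / (n : ℝ)) * ∑ j ∈ Finset.Icc 1 n, |b₁ n j * b₂ n j| * |W j ω - θ| ∂μ := by
      apply integral_mono (hfi.const_mul _).abs
        ((integrable_finset_sum _ fun j _ => (hWabs j).const_mul _).const_mul _)
      intro ω
      dsimp only
      rw [abs_mul, abs_of_nonneg (show (0:ℝ) ≤ 1/(n:ℝ) by positivity)]
      apply mul_le_mul_of_nonneg_left ?_ (by positivity)
      refine (Finset.abs_sum_le_sum_abs _ _).trans_eq ?_
      exact Finset.sum_congr rfl fun j _ => abs_mul _ _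
    have h2 : (∫ ω, (1 / (n : ℝ)) * ∑ j ∈ Finset.Icc 1 n, |b₁ n j * b₂ n j| * |W j ω - θ| ∂μ)
        = ∑ j ∈ Finset.Icc 1 n, (1 / (n : ℝ)) * (|b₁ n j * b₂ n j| * e j) := by
      rw [integral_const_mul, integral_finset_sum _ (fun j _ => (hWabs j).const_mul _),
        Finset.mul_sum]
      exact Finset.sum_congr rfl fun j _ => by rw [integral_const_mul]
    have h3 : ∑ j ∈ Finset.Icc 1 n, (1 / (n : ℝ)) * (|b₁ n j * b₂ n j| * e j)
        ≤ ∑ j ∈ Finset.Icc 1 n, K^2 * ((1 / (n : ℝ)) * ((n : ℝ) / ((j : ℝ) + 1)) ^ p * e j) := by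
      apply Finset.sum_le_sum
      intro j hj
      obtain ⟨hj1, hjn⟩ := Finset.mem_Icc.1 hj
      have hn1 : 1 ≤ n := le_trans hj1 hjn
      have hnpos : (0:ℝ) < n := by exact_mod_cast hn1
      have hjpos : (0:ℝ) < (j:ℝ) + 1 := by positivity
      have hbase : (0:ℝ) < (n:ℝ) / ((j:ℝ) + 1) := by positivity
      have hb : |b₁ n j * b₂ n j| ≤ K^2 * ((n : ℝ) / ((j : ℝ) + 1)) ^ p := by
        rw [abs_mul]
        calc |b₁ n j| * |b₂ n j|
            ≤ (K * ((n : ℝ) / ((j : ℝ) + 1)) ^ p₁) * (K * ((n : ℝ) / ((j : ℝ) + 1)) ^ p₂) :=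
              mul_le_mul (hb₁ n j hj1 hjn) (hb₂ n j hj1 hjn) (abs_nonneg _)
                (by positivity)
          _ = K^2 * ((n : ℝ) / ((j : ℝ) + 1)) ^ p := by
              rw [hpdef, Real.rpow_add hbase]
              ring
      calc (1 / (n : ℝ)) * (|b₁ n j * b₂ n j| * e j)
          ≤ (1 / (n : ℝ)) * ((K^2 * ((n : ℝ) / ((j : ℝ) + 1)) ^ p) * e j) :=
            mul_le_mul_of_nonneg_left (mul_le_mul_of_nonneg_right hb (he0 j)) (by positivity)
        _ = K^2 * ((1 / (n : ℝ)) * ((n : ℝ) / ((j : ℝ) + 1)) ^ p * e j) := by ring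
    calc (∫ ω, |(1 / (n : ℝ)) * ∑ j ∈ Finset.Icc 1 n, b₁ n j * b₂ n j * (W j ω - θ)| ∂μ)
        ≤ ∫ ω, (1 / (n : ℝ)) * ∑ j ∈ Finset.Icc 1 n, |b₁ n j * b₂ n j| * |W j ω - θ| ∂μ := h1
      _ = ∑ j ∈ Finset.Icc 1 n, (1 / (n : ℝ)) * (|b₁ n j * b₂ n j| * e j) := h2
      _ ≤ ∑ j ∈ Finset.Icc 1 n, K^2 * ((1 / (n : ℝ)) * ((n : ℝ) / ((j : ℝ) + 1)) ^ p * e j) := h3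
      _ = K^2 * ∑ j ∈ Finset.Icc 1 n, (1 / (n : ℝ)) * ((n : ℝ) / ((j : ℝ) + 1)) ^ p * e j := by
          rw [Finset.mul_sum]
  have hmain : Tendsto (fun n : ℕ =>
      K^2 * ∑ j ∈ Finset.Icc 1 n, (1 / (n : ℝ)) * ((n : ℝ) / ((j : ℝ) + 1)) ^ p * e j)
      atTop (nhds 0) := by
    simpa using (aux_cesaro (show p < 1 from hp) e he0 hconv).const_mul (K^2)
  exact squeeze_zero (fun n => integral_nonneg fun ω => abs_nonneg _) key hmain
end
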